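/- The cycle of length 5 is not odd 4-colorable; that is, there is no proper 4-coloring of C5 such that every vertex has some color appearing an odd number of times among its neighbors. -/
import Mathlib


open SimpleGraph

/-- A proper 4-coloring: adjacent vertices receive distinct colors. -/
def IsProper4 {V : Type*} (G : SimpleGraph V) (φ : V → Fin 4) : Prop :=
  ∀ ⦃u w : V⦄, G.Adj u w → φ u ≠ φ w

/-- The number of neighbors of `v` colored `i`. -/
noncomputable def nbrCount {V : Type*} (G : SimpleGraph V) (φ : V → Fin 4) (v : V) (i : Fin 4) : ℕ :=
  {u | u ∈ G.neighborSet v ∧ φ u = i}.ncard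

/-- `v` satisfies the odd condition: some color appears an odd number of times in `N(v)`. -/
def OddAt {V : Type*} (G : SimpleGraph V) (φ : V → Fin 4) (v : V) : Prop :=
  ∃ i : Fin 4, Odd (nbrCount G φ v i)

/-- `v` satisfies the even condition: some color `i ≠ φ v` appears an even number
of times (possibly zero) in `N(v)`. -/
def EvenAt {V : Type*} (G : SimpleGraph V) (φ : V → Fin 4) (v : V) : Prop :=
  ∃ i : Fin 4, i ≠ φ v ∧ Even (nbrCount G φ v i)

/-- An odd 4-coloring: a proper 4-coloring in which every non-isolated vertex
satisfies the odd condition. -/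
def IsOdd4Coloring {V : Type*} (G : SimpleGraph V) (φ : V → Fin 4) : Prop :=
  IsProper4 G φ ∧ ∀ v : V, (G.neighborSet v).Nonempty → OddAt G φ v

theorem c5_not_odd4colorable :
    ¬ ∃ φ : Fin 5 → Fin 4, IsOdd4Coloring (SimpleGraph.cycleGraph 5) φ := by
  rintro ⟨φ, hp, ho⟩
  have hne : ∀ v : Fin 5, v - 1 ≠ v + 1 := by decide
  have hmem : ∀ v u : Fin 5, u ∈ (cycleGraph 5).neighborSet v ↔ u = v - 1 ∨ u = v + 1 := by
    decide
  have key : ∀ v : Fin 5, φ (v - 1) ≠ φ (v + 1) := by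
    intro v h
    obtain ⟨i, hi⟩ := ho v ⟨v - 1, (hmem v (v - 1)).2 (Or.inl rfl)⟩
    have hset : {u | u ∈ (cycleGraph 5).neighborSet v ∧ φ u = i} =
        if φ (v + 1) = i then {v - 1, v + 1} else (∅ : Set (Fin 5)) := by
      split_ifs with hc
      · ext u
        simp only [Set.mem_setOf_eq, Set.mem_insert_iff, Set.mem_singleton_iff, hmem v u]
        constructor
        · rintro ⟨h1, _⟩; exact h1
        · rintro (rfl | rfl)
          · exact ⟨Or.inl rfl, h.trans hc⟩
          · exact ⟨Or.inr rfl, hc⟩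
      · ext u
        simp only [Set.mem_setOf_eq, Set.mem_empty_iff_false, iff_false, not_and, hmem v u]
        rintro (rfl | rfl)
        · exact fun hh => hc (h ▸ hh)
        · exact hc
    rw [nbrCount, hset] at hi
    split_ifs at hi with hc
    · rw [Set.ncard_pair (hne v)] at hi
      exact (Nat.not_odd_iff_even.2 (by norm_num)) hi
    · rw [Set.ncard_empty] at hi
      exact (Nat.not_odd_iff_even.2 Even.zero) hi
  have h01 := hp ((by decide : (cycleGraph 5).Adj 0 1))
  have h12 := hp ((by decide : (cycleGraph 5).Adj 1 2))
  have h23 := hp ((by decide : (cycleGraph 5).Adj 2 3))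
  have h34 := hp ((by decide : (cycleGraph 5).Adj 3 4))
  have h40 := hp ((by decide : (cycleGraph 5).Adj 4 0))
  have k0 := key 0; have k1 := key 1; have k2 := key 2
  have k3 := key 3; have k4 := key 4
  rw [show (0 : Fin 5) - 1 = 4 from rfl, show (0 : Fin 5) + 1 = 1 from rfl] at k0
  rw [show (1 : Fin 5) - 1 = 0 from rfl, show (1 : Fin 5) + 1 = 2 from rfl] at k1
  rw [show (2 : Fin 5) - 1 = 1 from rfl, show (2 : Fin 5) + 1 = 3 from rfl] at k2
  rw [show (3 : Fin 5) - 1 = 2 from rfl, show (3 : Fin 5) + 1 = 4 from rfl] at k3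
  rw [show (4 : Fin 5) - 1 = 3 from rfl, show (4 : Fin 5) + 1 = 0 from rfl] at k4
  exact (by decide : ∀ a b c d e : Fin 4, (a ≠ b ∧ b ≠ c ∧ c ≠ d ∧ d ≠ e ∧ e ≠ a ∧
      e ≠ b ∧ a ≠ c ∧ b ≠ d ∧ c ≠ e ∧ d ≠ a) → False)
    (φ 0) (φ 1) (φ 2) (φ 3) (φ 4)
    ⟨h01, h12, h23, h34, h40, k0, k1, k2, k3, k4⟩
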